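/- Let n ≥ 2 be an integer, let G be a finite abelian group isomorphic to C_2 ⊕ C_2 ⊕ C_{2n}, and let {f_1, f_2, f_3} be a basis of G with ord(f_1) = ord(f_2) = 2 and ord(f_3) = 2n. Let (α, β, γ) = (n/3, n/3, (n−3)/3) if n ≡ 0 (mod 3), (α, β, γ) = ((n−1)/3, (n−1)/3, (n−1)/3) if n ≡ 1 (mod 3), and (α, β, γ) = ((n+1)/3, (n−2)/3, (n−2)/3) if n ≡ 2 (mod 3). Then the sequence S = 0^{2α+1} f_1^{2β+1} f_2^{2γ+1} (f_3+f_1)^{2α+1} (f_3+f_2)^{2β+1} (f_3+f_1+f_2)^{2γ+1} has length 4n+2, has no zero-sum subsequence of length 2n, and its height h(S) equals 2·max(α,β,γ)+1, namely (2n+3)/3, (2n+1)/3, (2n+5)/3 in the respective cases n ≡ 0, 1, 2 (mod 3). -/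
import Mathlib

/-- The height lower bounds for extremal sequences for `s(C₂ ⊕ C₂ ⊕ C₂ₙ)` are attained. -/
theorem stmt_3 (n : ℕ) (hn : 2 ≤ n) (G : Type*) [AddCommGroup G] [Fintype G] [DecidableEq G]
    (hG : Nonempty (G ≃+ (ZMod 2 × ZMod 2 × ZMod (2 * n))))
    (f1 f2 f3 : G)
    (hgen : AddSubgroup.closure ({f1, f2, f3} : Set G) = ⊤)
    (hind : ∀ a b c : ℤ, a • f1 + b • f2 + c • f3 = 0 →
      a • f1 = 0 ∧ b • f2 = 0 ∧ c • f3 = 0)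
    (ho1 : addOrderOf f1 = 2) (ho2 : addOrderOf f2 = 2) (ho3 : addOrderOf f3 = 2 * n)
    (α β γ : ℕ)
    (habc : (n % 3 = 0 ∧ α = n / 3 ∧ β = n / 3 ∧ γ = (n - 3) / 3) ∨
            (n % 3 = 1 ∧ α = (n - 1) / 3 ∧ β = (n - 1) / 3 ∧ γ = (n - 1) / 3) ∨
            (n % 3 = 2 ∧ α = (n + 1) / 3 ∧ β = (n - 2) / 3 ∧ γ = (n - 2) / 3))
    (S : Multiset G)
    (hS : S = Multiset.replicate (2 * α + 1) (0 : G)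
            + Multiset.replicate (2 * β + 1) f1
            + Multiset.replicate (2 * γ + 1) f2
            + Multiset.replicate (2 * α + 1) (f3 + f1)
            + Multiset.replicate (2 * β + 1) (f3 + f2)
            + Multiset.replicate (2 * γ + 1) (f3 + f1 + f2)) :
    Multiset.card S = 4 * n + 2 ∧
    (¬ ∃ T : Multiset G, T ≤ S ∧ Multiset.card T = 2 * n ∧ T.sum = 0) ∧
    Finset.univ.sup (fun g => S.count g) = 2 * max α (max β γ) + 1 ∧
    Finset.univ.sup (fun g => S.count g)
      = (if n % 3 = 0 then (2 * n + 3) / 3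
         else if n % 3 = 1 then (2 * n + 1) / 3
         else (2 * n + 5) / 3) := by
  -- basic arithmetic from habc
  have hsum3 : α + β + γ + 1 = n := by rcases habc with ⟨h, ha, hb, hc⟩ | ⟨h, ha, hb, hc⟩ | ⟨h, ha, hb, hc⟩ <;> omega
  -- nonvanishing facts
  have hne1 : f1 ≠ 0 := by intro h; rw [h, addOrderOf_zero] at ho1; omega
  have hne2 : f2 ≠ 0 := by intro h; rw [h, addOrderOf_zero] at ho2; omega
  have hne3 : f3 ≠ 0 := by intro h; rw [h, addOrderOf_zero] at ho3; omega
  have hne12 : f1 ≠ f2 := by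
    intro h
    have := (hind 1 (-1) 0 (by simp [h])).1
    simp at this; exact hne1 this
  -- key: a • f1 + b • f2 + f3 ≠ 0
  have hkey : ∀ a b : ℤ, a • f1 + b • f2 + f3 ≠ 0 := by
    intro a b h
    have := (hind a b 1 (by simpa using h)).2.2
    simp at this; exact hne3 this
  -- pairwise distinctness of the six elements
  have d01 : (0 : G) ≠ f1 := fun h => hne1 h.symm
  have d02 : (0 : G) ≠ f2 := fun h => hne2 h.symm
  have d03 : (0 : G) ≠ f3 + f1 := by
    intro h
    apply hkey 1 0
    calc (1:ℤ) • f1 + (0:ℤ) • f2 + f3 = (f3 + f1) - 0 := by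
          rw [one_zsmul, zero_zsmul]; abel
      _ = 0 := by rw [← h]; abel
  have d04 : (0 : G) ≠ f3 + f2 := by
    intro h
    apply hkey 0 1
    calc (0:ℤ) • f1 + (1:ℤ) • f2 + f3 = (f3 + f2) - 0 := by
          rw [one_zsmul, zero_zsmul]; abel
      _ = 0 := by rw [← h]; abel
  have d05 : (0 : G) ≠ f3 + f1 + f2 := by
    intro h
    apply hkey 1 1
    calc (1:ℤ) • f1 + (1:ℤ) • f2 + f3 = (f3 + f1 + f2) - 0 := by
          rw [one_zsmul]; abel
      _ = 0 := by rw [← h]; abel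
  have d12 : f1 ≠ f2 := hne12
  have d13 : f1 ≠ f3 + f1 := by
    intro h
    apply hne3
    calc f3 = (f3 + f1) - f1 := by abel
      _ = 0 := by rw [← h]; abel
  have d14 : f1 ≠ f3 + f2 := by
    intro h
    apply hkey (-1) 1
    calc (-1:ℤ) • f1 + (1:ℤ) • f2 + f3 = (f3 + f2) - f1 := by
          rw [one_zsmul, neg_one_zsmul]; abel
      _ = 0 := by rw [← h]; abel
  have d15 : f1 ≠ f3 + f1 + f2 := by
    intro h
    apply hkey 0 1
    calc (0:ℤ) • f1 + (1:ℤ) • f2 + f3 = (f3 + f1 + f2) - f1 := by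
          rw [one_zsmul, zero_zsmul]; abel
      _ = 0 := by rw [← h]; abel
  have d23 : f2 ≠ f3 + f1 := by
    intro h
    apply hkey 1 (-1)
    calc (1:ℤ) • f1 + (-1:ℤ) • f2 + f3 = (f3 + f1) - f2 := by
          rw [one_zsmul, neg_one_zsmul]; abel
      _ = 0 := by rw [← h]; abel
  have d24 : f2 ≠ f3 + f2 := by
    intro h
    apply hne3
    calc f3 = (f3 + f2) - f2 := by abel
      _ = 0 := by rw [← h]; abel
  have d25 : f2 ≠ f3 + f1 + f2 := by
    intro h
    apply hkey 1 0
    calc (1:ℤ) • f1 + (0:ℤ) • f2 + f3 = (f3 + f1 + f2) - f2 := by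
          rw [one_zsmul, zero_zsmul]; abel
      _ = 0 := by rw [← h]; abel
  have d34 : f3 + f1 ≠ f3 + f2 := by intro h; exact hne12 (by rwa [add_right_inj] at h)
  have d35 : f3 + f1 ≠ f3 + f1 + f2 := by
    intro h
    apply hne2
    calc f2 = (f3 + f1 + f2) - (f3 + f1) := by abel
      _ = 0 := by rw [← h]; abel
  have d45 : f3 + f2 ≠ f3 + f1 + f2 := by
    intro h
    apply hne1
    calc f1 = (f3 + f1 + f2) - (f3 + f2) := by abel
      _ = 0 := by rw [← h]; abel
  -- symmetric versions
  have e01 : ¬ ((0:G) = f1) := d01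
  have e02 : ¬ ((0:G) = f2) := d02
  have e03 : ¬ ((0:G) = f3 + f1) := d03
  have e04 : ¬ ((0:G) = f3 + f2) := d04
  have e05 : ¬ ((0:G) = f3 + f1 + f2) := d05
  have e10 : ¬ (f1 = (0:G)) := hne1
  have e20 : ¬ (f2 = (0:G)) := hne2
  have e30 : ¬ (f3 + f1 = (0:G)) := Ne.symm d03
  have e40 : ¬ (f3 + f2 = (0:G)) := Ne.symm d04
  have e50 : ¬ (f3 + f1 + f2 = (0:G)) := Ne.symm d05
  have e12 : ¬ (f1 = f2) := d12
  have e21 : ¬ (f2 = f1) := Ne.symm d12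
  have e13 : ¬ (f1 = f3 + f1) := d13
  have e31 : ¬ (f3 + f1 = f1) := Ne.symm d13
  have e14 : ¬ (f1 = f3 + f2) := d14
  have e41 : ¬ (f3 + f2 = f1) := Ne.symm d14
  have e15 : ¬ (f1 = f3 + f1 + f2) := d15
  have e51 : ¬ (f3 + f1 + f2 = f1) := Ne.symm d15
  have e23 : ¬ (f2 = f3 + f1) := d23
  have e32 : ¬ (f3 + f1 = f2) := Ne.symm d23
  have e24 : ¬ (f2 = f3 + f2) := d24
  have e42 : ¬ (f3 + f2 = f2) := Ne.symm d24
  have e25 : ¬ (f2 = f3 + f1 + f2) := d25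
  have e52 : ¬ (f3 + f1 + f2 = f2) := Ne.symm d25
  have e34 : ¬ (f3 + f1 = f3 + f2) := d34
  have e43 : ¬ (f3 + f2 = f3 + f1) := Ne.symm d34
  have e35 : ¬ (f3 + f1 = f3 + f1 + f2) := d35
  have e53 : ¬ (f3 + f1 + f2 = f3 + f1) := Ne.symm d35
  have e45 : ¬ (f3 + f2 = f3 + f1 + f2) := d45
  have e54 : ¬ (f3 + f1 + f2 = f3 + f2) := Ne.symm d45
  -- counts in S
  have c0 : S.count 0 = 2 * α + 1 := by
    rw [hS]
    simp only [Multiset.count_add, Multiset.count_replicate]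
    rw [if_pos trivial, if_neg e10, if_neg e20, if_neg e30, if_neg e40, if_neg e50]
  have c1 : S.count f1 = 2 * β + 1 := by
    rw [hS]
    simp only [Multiset.count_add, Multiset.count_replicate]
    rw [if_pos trivial, if_neg e01, if_neg e21, if_neg e31, if_neg e41, if_neg e51]
    omega
  have c2 : S.count f2 = 2 * γ + 1 := by
    rw [hS]
    simp only [Multiset.count_add, Multiset.count_replicate]
    rw [if_pos trivial, if_neg e02, if_neg e12, if_neg e32, if_neg e42, if_neg e52]
    omega
  have c3 : S.count (f3 + f1) = 2 * α + 1 := by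
    rw [hS]
    simp only [Multiset.count_add, Multiset.count_replicate]
    rw [if_pos trivial, if_neg e03, if_neg e13, if_neg e23, if_neg e43, if_neg e53]
    omega
  have c4 : S.count (f3 + f2) = 2 * β + 1 := by
    rw [hS]
    simp only [Multiset.count_add, Multiset.count_replicate]
    rw [if_pos trivial, if_neg e04, if_neg e14, if_neg e24, if_neg e34, if_neg e54]
    omega
  have c5 : S.count (f3 + f1 + f2) = 2 * γ + 1 := by
    rw [hS]
    simp only [Multiset.count_add, Multiset.count_replicate]
    rw [if_pos trivial, if_neg e05, if_neg e15, if_neg e25, if_neg e35, if_neg e45]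
    omega
  have cother : ∀ g : G, g ≠ 0 → g ≠ f1 → g ≠ f2 → g ≠ f3 + f1 → g ≠ f3 + f2 →
      g ≠ f3 + f1 + f2 → S.count g = 0 := by
    intro g h0 h1 h2 h3 h4 h5
    rw [hS]
    simp only [Multiset.count_add, Multiset.count_replicate]
    rw [if_neg (Ne.symm h0), if_neg (Ne.symm h1), if_neg (Ne.symm h2),
      if_neg (Ne.symm h3), if_neg (Ne.symm h4), if_neg (Ne.symm h5)]
  -- the height of S
  have hles : Finset.univ.sup (fun g => S.count g) ≤ 2 * max α (max β γ) + 1 := by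
    apply Finset.sup_le
    intro g _
    by_cases h0 : g = 0
    · subst h0; rw [c0]; omega
    by_cases h1 : g = f1
    · subst h1; rw [c1]; omega
    by_cases h2 : g = f2
    · subst h2; rw [c2]; omega
    by_cases h3 : g = f3 + f1
    · subst h3; rw [c3]; omega
    by_cases h4 : g = f3 + f2
    · subst h4; rw [c4]; omega
    by_cases h5 : g = f3 + f1 + f2
    · subst h5; rw [c5]; omega
    · rw [cother g h0 h1 h2 h3 h4 h5]; omega
  have hge0 : 2 * α + 1 ≤ Finset.univ.sup (fun g => S.count g) := by
    have := Finset.le_sup (f := fun g => S.count g) (Finset.mem_univ (0 : G))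
    simpa only [c0] using this
  have hge1 : 2 * β + 1 ≤ Finset.univ.sup (fun g => S.count g) := by
    have := Finset.le_sup (f := fun g => S.count g) (Finset.mem_univ f1)
    simpa only [c1] using this
  have hge2 : 2 * γ + 1 ≤ Finset.univ.sup (fun g => S.count g) := by
    have := Finset.le_sup (f := fun g => S.count g) (Finset.mem_univ f2)
    simpa only [c2] using this
  have hheight : Finset.univ.sup (fun g => S.count g) = 2 * max α (max β γ) + 1 := by omega
  refine ⟨?_, ?_, hheight, ?_⟩
  · rw [hS]
    simp only [Multiset.card_add, Multiset.card_replicate]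
    omega
  · rintro ⟨T, hT, hcard, hsum⟩
    set a0 := T.count 0 with ha0
    set a1 := T.count f1 with ha1
    set a2 := T.count f2 with ha2
    set a3 := T.count (f3 + f1) with ha3
    set a4 := T.count (f3 + f2) with ha4
    set a5 := T.count (f3 + f1 + f2) with ha5
    have hle : ∀ g, T.count g ≤ S.count g := fun g => Multiset.count_le_of_le g hT
    have b0 : a0 ≤ 2 * α + 1 := by have := hle 0; simpa only [c0] using this
    have b1 : a1 ≤ 2 * β + 1 := by have := hle f1; rwa [c1] at this
    have b2 : a2 ≤ 2 * γ + 1 := by have := hle f2; rwa [c2] at this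
    have b3 : a3 ≤ 2 * α + 1 := by have := hle (f3 + f1); rwa [c3] at this
    have b4 : a4 ≤ 2 * β + 1 := by have := hle (f3 + f2); rwa [c4] at this
    have b5 : a5 ≤ 2 * γ + 1 := by have := hle (f3 + f1 + f2); rwa [c5] at this
    have hTeq : T = Multiset.replicate a0 (0 : G) + Multiset.replicate a1 f1
        + Multiset.replicate a2 f2 + Multiset.replicate a3 (f3 + f1)
        + Multiset.replicate a4 (f3 + f2) + Multiset.replicate a5 (f3 + f1 + f2) := by
      ext g
      rw [Multiset.count_add, Multiset.count_add, Multiset.count_add, Multiset.count_add,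
        Multiset.count_add]
      simp only [Multiset.count_replicate]
      by_cases h0 : g = 0
      · subst h0
        rw [if_pos rfl, if_neg e10, if_neg e20, if_neg e30, if_neg e40, if_neg e50]
        omega
      by_cases h1 : g = f1
      · subst h1
        rw [if_pos rfl, if_neg e01, if_neg e21, if_neg e31, if_neg e41, if_neg e51]
        omega
      by_cases h2 : g = f2
      · subst h2
        rw [if_pos rfl, if_neg e02, if_neg e12, if_neg e32, if_neg e42, if_neg e52]
        omega
      by_cases h3 : g = f3 + f1
      · subst h3
        rw [if_pos rfl, if_neg e03, if_neg e13, if_neg e23, if_neg e43, if_neg e53]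
        omega
      by_cases h4 : g = f3 + f2
      · subst h4
        rw [if_pos rfl, if_neg e04, if_neg e14, if_neg e24, if_neg e34, if_neg e54]
        omega
      by_cases h5 : g = f3 + f1 + f2
      · subst h5
        rw [if_pos rfl, if_neg e05, if_neg e15, if_neg e25, if_neg e35, if_neg e45]
        omega
      · have hz : T.count g = 0 := by
          have := hle g
          rw [cother g h0 h1 h2 h3 h4 h5] at this
          omega
        rw [hz, if_neg (Ne.symm h0), if_neg (Ne.symm h1), if_neg (Ne.symm h2),
          if_neg (Ne.symm h3), if_neg (Ne.symm h4), if_neg (Ne.symm h5)]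
    have hcard' : a0 + a1 + a2 + a3 + a4 + a5 = 2 * n := by
      rw [hTeq] at hcard
      simp only [Multiset.card_add, Multiset.card_replicate] at hcard
      omega
    have hsum' : (a1 + a3 + a5) • f1 + (a2 + a4 + a5) • f2 + (a3 + a4 + a5) • f3 = 0 := by
      rw [hTeq] at hsum
      simp only [Multiset.sum_add, Multiset.sum_replicate, smul_zero, zero_add] at hsum
      rw [← hsum]
      simp only [add_smul, smul_add]
      abel
    have hind' := hind ((a1 + a3 + a5 : ℕ) : ℤ) ((a2 + a4 + a5 : ℕ) : ℤ) ((a3 + a4 + a5 : ℕ) : ℤ)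
      (by rw [natCast_zsmul, natCast_zsmul, natCast_zsmul]; exact hsum')
    have hd1 : 2 ∣ a1 + a3 + a5 := by
      rw [← ho1]
      exact addOrderOf_dvd_of_nsmul_eq_zero (by rw [← natCast_zsmul]; exact hind'.1)
    have hd2 : 2 ∣ a2 + a4 + a5 := by
      rw [← ho2]
      exact addOrderOf_dvd_of_nsmul_eq_zero (by rw [← natCast_zsmul]; exact hind'.2.1)
    have hd3 : 2 * n ∣ a3 + a4 + a5 := by
      rw [← ho3]
      exact addOrderOf_dvd_of_nsmul_eq_zero (by rw [← natCast_zsmul]; exact hind'.2.2)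
    obtain ⟨k, hk⟩ := hd3
    rcases Nat.lt_or_ge k 2 with hk2 | hk2
    · interval_cases k <;> omega
    · have h4 : 4 * n ≤ a3 + a4 + a5 := by
        rw [hk]
        calc 4 * n = 2 * n * 2 := by ring
          _ ≤ 2 * n * k := Nat.mul_le_mul_left _ hk2
      omega
  · rw [hheight]
    rcases habc with ⟨h, ha, hb, hc⟩ | ⟨h, ha, hb, hc⟩ | ⟨h, ha, hb, hc⟩ <;>
      split_ifs <;> omega
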